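/- The following 24 words in the generators of Γ₄ are each equal to the 5×5 identity matrix: g₄g₈⁻²g₁₇⁻¹, g₃g₄²g₁₃, g₄g₆⁻¹g₁₄g₈, g₃g₁₄g₁₇⁻¹g₄⁻¹, g₃g₁₃⁻¹g₁₇g₁₀, g₄g₁₀⁻¹g₁₃⁻¹g₈⁻¹, g₃g₁₇g₁₁⁻¹g₈⁻¹, g₁g₁₁⁻¹g₁₃g₅⁻¹, g₂g₁₁⁻¹g₄g₁₄⁻¹, g₂g₁₃g₁₇⁻¹g₁₁, g₃g₅⁻¹g₆⁻¹g₄, g₁g₁₄g₃g₁₀⁻¹, g₈g₁₄⁻¹g₁₁², g₃²g₆g₁₀⁻¹, g₆g₁₃g₈g₁₁⁻¹, g₅g₁₀⁻¹g₆⁻¹g₁₃⁻¹, g₂g₁₇⁻¹g₁₀⁻¹g₅⁻¹, g₅g₁₄g₁₀², g₁g₅⁻²g₁₇, g₁g₆g₁₄⁻¹g₅, g₁g₂g₈⁻¹g₆, g₂²g₆⁻¹g₁₁⁻¹, g₁²g₁₃⁻¹g₂, g₁g₁₇⁻¹g₁₄g₂⁻¹. (These are the defining relators of the fundamental group Γ₄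 of the manifold 24c1.4, one for each of the 24 ridge cycles.) -/
import Mathlib
set_option maxHeartbeats 4000000

open Matrix


noncomputable def g1 : Matrix (Fin 5) (Fin 5) ℝ :=
  (1/2 : ℝ) • !![1, -1, -1, 1, 0; -3, -3, 1, 1, 4; -3, -3, -1, -1, 4; 1, -1, 1, -1, 0; -4, -4, 0, 0, 6]

noncomputable def g2 : Matrix (Fin 5) (Fin 5) ℝ :=
  !![0, 0, -1, 0, 0; 1, -2, 0, 0, 2; 0, 0, 0, 1, 0; -2, 1, 0, 0, -2; 2, -2, 0, 0, 3]

noncomputable def g3 : Matrix (Fin 5) (Fin 5) ℝ :=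
  !![0, 0, -1, 0, 0; 1, -2, 0, 0, -2; 0, 0, 0, 1, 0; -2, 1, 0, 0, 2; -2, 2, 0, 0, 3]

noncomputable def g4 : Matrix (Fin 5) (Fin 5) ℝ :=
  (1/2 : ℝ) • !![1, -1, -1, 1, 0; -3, -3, 1, 1, -4; -3, -3, -1, -1, -4; 1, -1, 1, -1, 0; 4, 4, 0, 0, 6]

noncomputable def g5 : Matrix (Fin 5) (Fin 5) ℝ :=
  !![0, 1, 0, 0, 0; 0, 0, 0, 1, 0; -1, 0, -2, 0, 2; 2, 0, 1, 0, -2; -2, 0, -2, 0, 3]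

noncomputable def g6 : Matrix (Fin 5) (Fin 5) ℝ :=
  (1/2 : ℝ) • !![3, -1, -3, 1, 4; -1, 1, -1, 1, 0; -3, -1, 3, 1, -4; 1, 1, 1, 1, 0; 4, 0, -4, 0, 6]

noncomputable def g8 : Matrix (Fin 5) (Fin 5) ℝ :=
  !![0, 1, 0, 0, 0; 0, 0, 0, 1, 0; -1, 0, -2, 0, -2; 2, 0, 1, 0, 2; 2, 0, 2, 0, 3]

noncomputable def g10 : Matrix (Fin 5) (Fin 5) ℝ :=
  (1/2 : ℝ) • !![-1, -1, -1, -1, 0; 1, -1, -1, 1, 0; 1, 3, -3, -1, 4; -1, 3, -3, 1, 4; 0, 4, -4, 0, 6]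

noncomputable def g11 : Matrix (Fin 5) (Fin 5) ℝ :=
  (1/2 : ℝ) • !![-1, -1, -1, -1, 0; 1, -1, -1, 1, 0; 1, 3, -3, -1, -4; -1, 3, -3, 1, -4; 0, -4, 4, 0, 6]

noncomputable def g13 : Matrix (Fin 5) (Fin 5) ℝ :=
  !![2, 0, 0, 1, -2; 0, 1, 0, 0, 0; 0, 0, -1, 0, 0; 1, 0, 0, 2, -2; -2, 0, 0, -2, 3]

noncomputable def g14 : Matrix (Fin 5) (Fin 5) ℝ :=
  !![2, 0, 0, -1, 2; 0, -1, 0, 0, 0; 0, 0, 1, 0, 0; -1, 0, 0, 2, -2; 2, 0, 0, -2, 3]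

noncomputable def g17 : Matrix (Fin 5) (Fin 5) ℝ :=
  (1/2 : ℝ) • !![1, 1, -1, -1, 0; 1, 3, 1, 3, -4; -1, 1, 1, -1, 0; -1, 3, -1, 3, -4; 0, -4, 0, -4, 6]

theorem mul5 (a00 a01 a02 a03 a04 a10 a11 a12 a13 a14 a20 a21 a22 a23 a24 a30 a31 a32 a33 a34 a40 a41 a42 a43 a44 b00 b01 b02 b03 b04 b10 b11 b12 b13 b14 b20 b21 b22 b23 b24 b30 b31 b32 b33 b34 b40 b41 b42 b43 b44 : ℝ) :
    !![a00, a01, a02, a03, a04; a10, a11, a12, a13, a14; a20, a21, a22, a23, a24; a30, a31, a32, a33, a34; a40, a41, a42, a43, a44] * !![b00, b01, b02, b03, b04; b10, b11, b12, b13, b14; b20, b21, b22, b23, b24; b30, b31, b32, b33, b34; b40, b41, b42, b43, b44] = !![a00 * b00 + a01 * b10 + a02 * b20 + a03 * b30 + a04 * b40, a00 * b01 + a01 * b11 + a02 * b21 + a03 * b31 + a04 * b41, a00 * b02 + a01 * b12 + a02 * b22 + a03 * b32 + a04 * b42, a00 * b03 + a01 * b13 + a02 * b23 + a03 * b33 +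 a04 * b43, a00 * b04 + a01 * b14 + a02 * b24 + a03 * b34 + a04 * b44; a10 * b00 + a11 * b10 + a12 * b20 + a13 * b30 + a14 * b40, a10 * b01 + a11 * b11 + a12 * b21 + a13 * b31 + a14 * b41, a10 * b02 + a11 * b12 + a12 * b22 + a13 * b32 + a14 * b42, a10 * b03 + a11 * b13 + a12 * b23 + a13 * b33 + a14 * b43, a10 * b04 + a11 * b14 + a12 * b24 + a13 * b34 + a14 * b44; a20 * b00 + a21 * b10 + a22 * b20 + a23 * b30 + a24 * b40, a20 * b01 + a21 * b11 + a22 * b21 + a23 * b31 + a24 * b41, a20 * b02 + a21 * b12 + a22 * b22 + a23 * b32 + a24 * b42, a20 * b03 + a21 * b13 + a22 * b23 + a23 * b33 + a24 * b43, a20 * b04 + a21 * b14 + a22 * b24 + a23 * b34 + a24 * b44; a30 * b00 + a31 * b10 + a32 * b20 + a33 * b30 + a34 * b40, a30 * b01 + a31 * b11 + a32 * b21 + a33 * b31 + a34 * b41, a30 * b02 + a31 * b12 + a32 * b22 + a33 * b32 + a34 * b42, a30 * b03 + a31 * b13 + a32 * b23 + a33 * b33 + a34 * b43, a30 * b04 +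 a31 * b14 + a32 * b24 + a33 * b34 + a34 * b44; a40 * b00 + a41 * b10 + a42 * b20 + a43 * b30 + a44 * b40, a40 * b01 + a41 * b11 + a42 * b21 + a43 * b31 + a44 * b41, a40 * b02 + a41 * b12 + a42 * b22 + a43 * b32 + a44 * b42, a40 * b03 + a41 * b13 + a42 * b23 + a43 * b33 + a44 * b43, a40 * b04 + a41 * b14 + a42 * b24 + a43 * b34 + a44 * b44] := by
  ext i j
  fin_cases i <;> fin_cases j <;> simp [Matrix.mul_apply, Fin.sum_univ_five]

theorem smul5 (c a00 a01 a02 a03 a04 a10 a11 a12 a13 a14 a20 a21 a22 a23 a24 a30 a31 a32 a33 a34 a40 a41 a42 a43 a44 : ℝ) :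
    c • !![a00, a01, a02, a03, a04; a10, a11, a12, a13, a14; a20, a21, a22, a23, a24; a30, a31, a32, a33, a34; a40, a41, a42, a43, a44] = !![c * a00, c * a01, c * a02, c * a03, c * a04; c * a10, c * a11, c * a12, c * a13, c * a14; c * a20, c * a21, c * a22, c * a23, c * a24; c * a30, c * a31, c * a32, c * a33, c * a34; c * a40, c * a41, c * a42, c * a43, c * a44] := by
  ext i j
  fin_cases i <;> fin_cases j <;> simp

theorem one5 : (1 : Matrix (Fin 5) (Fin 5) ℝ) = !![1, 0, 0, 0, 0; 0, 1, 0, 0, 0; 0, 0, 1, 0, 0; 0, 0, 0, 1, 0; 0, 0, 0, 0, 1] := by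
  ext i j
  fin_cases i <;> fin_cases j <;> simp [Matrix.one_apply, Matrix.vecHead, Matrix.vecTail]


theorem h1 : g1⁻¹ = (1/2 : ℝ) • !![1, -3, -3, 1, 4; -1, -3, -3, -1, 4; -1, 1, -1, 1, 0; 1, 1, -1, -1, 0; 0, -4, -4, 0, 6] :=
  Matrix.inv_eq_right_inv (by rw [g1]; norm_num [smul5, mul5, ← one5])

theorem h2 : g2⁻¹ = !![0, 1, 0, -2, -2; 0, -2, 0, 1, 2; -1, 0, 0, 0, 0; 0, 0, 1, 0, 0; 0, -2, 0, 2, 3] :=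
  Matrix.inv_eq_right_inv (by rw [g2]; norm_num [mul5, ← one5])

theorem h3 : g3⁻¹ = !![0, 1, 0, -2, 2; 0, -2, 0, 1, -2; -1, 0, 0, 0, 0; 0, 0, 1, 0, 0; 0, 2, 0, -2, 3] :=
  Matrix.inv_eq_right_inv (by rw [g3]; norm_num [mul5, ← one5])

theorem h4 : g4⁻¹ = (1/2 : ℝ) • !![1, -3, -3, 1, -4; -1, -3, -3, -1, -4; -1, 1, -1, 1, 0; 1, 1, -1, -1, 0; 0, 4, 4, 0, 6] :=
  Matrix.inv_eq_right_inv (by rw [g4]; norm_num [smul5, mul5, ← one5])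

theorem h5 : g5⁻¹ = !![0, 0, -1, 2, 2; 1, 0, 0, 0, 0; 0, 0, -2, 1, 2; 0, 1, 0, 0, 0; 0, 0, -2, 2, 3] :=
  Matrix.inv_eq_right_inv (by rw [g5]; norm_num [mul5, ← one5])

theorem h6 : g6⁻¹ = (1/2 : ℝ) • !![3, -1, -3, 1, -4; -1, 1, -1, 1, 0; -3, -1, 3, 1, 4; 1, 1, 1, 1, 0; -4, 0, 4, 0, 6] :=
  Matrix.inv_eq_right_inv (by rw [g6]; norm_num [smul5, mul5, ← one5])

theorem h8 : g8⁻¹ = !![0, 0, -1, 2, -2; 1, 0, 0, 0, 0; 0, 0, -2, 1, -2; 0, 1, 0, 0, 0; 0, 0, 2, -2, 3] :=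
  Matrix.inv_eq_right_inv (by rw [g8]; norm_num [mul5, ← one5])

theorem h10 : g10⁻¹ = (1/2 : ℝ) • !![-1, 1, 1, -1, 0; -1, -1, 3, 3, -4; -1, -1, -3, -3, 4; -1, 1, -1, 1, 0; 0, 0, -4, -4, 6] :=
  Matrix.inv_eq_right_inv (by rw [g10]; norm_num [smul5, mul5, ← one5])

theorem h11 : g11⁻¹ = (1/2 : ℝ) • !![-1, 1, 1, -1, 0; -1, -1, 3, 3, 4; -1, -1, -3, -3, -4; -1, 1, -1, 1, 0; 0, 0, 4, 4, 6] :=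
  Matrix.inv_eq_right_inv (by rw [g11]; norm_num [smul5, mul5, ← one5])

theorem h13 : g13⁻¹ = !![2, 0, 0, 1, 2; 0, 1, 0, 0, 0; 0, 0, -1, 0, 0; 1, 0, 0, 2, 2; 2, 0, 0, 2, 3] :=
  Matrix.inv_eq_right_inv (by rw [g13]; norm_num [mul5, ← one5])

theorem h14 : g14⁻¹ = !![2, 0, 0, -1, -2; 0, -1, 0, 0, 0; 0, 0, 1, 0, 0; -1, 0, 0, 2, 2; -2, 0, 0, 2, 3] :=
  Matrix.inv_eq_right_inv (by rw [g14]; norm_num [mul5, ← one5])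

theorem h17 : g17⁻¹ = (1/2 : ℝ) • !![1, 1, -1, -1, 0; 1, 3, 1, 3, 4; -1, 1, 1, -1, 0; -1, 3, -1, 3, 4; 0, 4, 0, 4, 6] :=
  Matrix.inv_eq_right_inv (by rw [g17]; norm_num [smul5, mul5, ← one5])

theorem r1 : g4 * g8⁻¹ ^ 2 * g17⁻¹ = 1 := by
  rw [pow_two, g4, h8, h17]
  norm_num [smul5, mul5, ← one5]

theorem r2 : g3 * g4 ^ 2 * g13 = 1 := by
  rw [pow_two, g3, g4, g13]
  norm_num [smul5, mul5, ← one5]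

theorem r3 : g4 * g6⁻¹ * g14 * g8 = 1 := by
  rw [g4, h6, g14, g8]
  norm_num [smul5, mul5, ← one5]

theorem r4 : g3 * g14 * g17⁻¹ * g4⁻¹ = 1 := by
  rw [g3, g14, h17, h4]
  norm_num [smul5, mul5, ← one5]

theorem r5 : g3 * g13⁻¹ * g17 * g10 = 1 := by
  rw [g3, h13, g17, g10]
  norm_num [smul5, mul5, ← one5]

theorem r6 : g4 * g10⁻¹ * g13⁻¹ * g8⁻¹ = 1 := by
  rw [g4, h10, h13, h8]
  norm_num [smul5, mul5, ← one5]

theorem r7 : g3 * g17 * g11⁻¹ * g8⁻¹ = 1 := by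
  rw [g3, g17, h11, h8]
  norm_num [smul5, mul5, ← one5]

theorem r8 : g1 * g11⁻¹ * g13 * g5⁻¹ = 1 := by
  rw [g1, h11, g13, h5]
  norm_num [smul5, mul5, ← one5]

theorem r9 : g2 * g11⁻¹ * g4 * g14⁻¹ = 1 := by
  rw [g2, h11, g4, h14]
  norm_num [smul5, mul5, ← one5]

theorem r10 : g2 * g13 * g17⁻¹ * g11 = 1 := by
  rw [g2, g13, h17, g11]
  norm_num [smul5, mul5, ← one5]

theorem r11 : g3 * g5⁻¹ * g6⁻¹ * g4 = 1 := by
  rw [g3, h5, h6, g4]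
  norm_num [smul5, mul5, ← one5]

theorem r12 : g1 * g14 * g3 * g10⁻¹ = 1 := by
  rw [g1, g14, g3, h10]
  norm_num [smul5, mul5, ← one5]

theorem r13 : g8 * g14⁻¹ * g11 ^ 2 = 1 := by
  rw [pow_two, g8, h14, g11]
  norm_num [smul5, mul5, ← one5]

theorem r14 : g3 ^ 2 * g6 * g10⁻¹ = 1 := by
  rw [pow_two, g3, g6, h10]
  norm_num [smul5, mul5, ← one5]

theorem r15 : g6 * g13 * g8 * g11⁻¹ = 1 := by
  rw [g6, g13, g8, h11]
  norm_num [smul5, mul5, ← one5]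

theorem r16 : g5 * g10⁻¹ * g6⁻¹ * g13⁻¹ = 1 := by
  rw [g5, h10, h6, h13]
  norm_num [smul5, mul5, ← one5]

theorem r17 : g2 * g17⁻¹ * g10⁻¹ * g5⁻¹ = 1 := by
  rw [g2, h17, h10, h5]
  norm_num [smul5, mul5, ← one5]

theorem r18 : g5 * g14 * g10 ^ 2 = 1 := by
  rw [pow_two, g5, g14, g10]
  norm_num [smul5, mul5, ← one5]

theorem r19 : g1 * g5⁻¹ ^ 2 * g17 = 1 := by
  rw [pow_two, g1, h5, g17]
  norm_num [smul5, mul5, ← one5]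

theorem r20 : g1 * g6 * g14⁻¹ * g5 = 1 := by
  rw [g1, g6, h14, g5]
  norm_num [smul5, mul5, ← one5]

theorem r21 : g1 * g2 * g8⁻¹ * g6 = 1 := by
  rw [g1, g2, h8, g6]
  norm_num [smul5, mul5, ← one5]

theorem r22 : g2 ^ 2 * g6⁻¹ * g11⁻¹ = 1 := by
  rw [pow_two, g2, h6, h11]
  norm_num [smul5, mul5, ← one5]

theorem r23 : g1 ^ 2 * g13⁻¹ * g2 = 1 := by
  rw [pow_two, g1, h13, g2]
  norm_num [smul5, mul5, ← one5]

theorem r24 : g1 * g17⁻¹ * g14 * g2⁻¹ = 1 := by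
  rw [g1, h17, g14, h2]
  norm_num [smul5, mul5, ← one5]

theorem stmt11 :
    g4 * g8⁻¹ ^ 2 * g17⁻¹ = 1 ∧
    g3 * g4 ^ 2 * g13 = 1 ∧
    g4 * g6⁻¹ * g14 * g8 = 1 ∧
    g3 * g14 * g17⁻¹ * g4⁻¹ = 1 ∧
    g3 * g13⁻¹ * g17 * g10 = 1 ∧
    g4 * g10⁻¹ * g13⁻¹ * g8⁻¹ = 1 ∧
    g3 * g17 * g11⁻¹ * g8⁻¹ = 1 ∧
    g1 * g11⁻¹ * g13 * g5⁻¹ = 1 ∧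
    g2 * g11⁻¹ * g4 * g14⁻¹ = 1 ∧
    g2 * g13 * g17⁻¹ * g11 = 1 ∧
    g3 * g5⁻¹ * g6⁻¹ * g4 = 1 ∧
    g1 * g14 * g3 * g10⁻¹ = 1 ∧
    g8 * g14⁻¹ * g11 ^ 2 = 1 ∧
    g3 ^ 2 * g6 * g10⁻¹ = 1 ∧
    g6 * g13 * g8 * g11⁻¹ = 1 ∧
    g5 * g10⁻¹ * g6⁻¹ * g13⁻¹ = 1 ∧
    g2 * g17⁻¹ * g10⁻¹ * g5⁻¹ = 1 ∧
    g5 * g14 * g10 ^ 2 = 1 ∧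
    g1 * g5⁻¹ ^ 2 * g17 = 1 ∧
    g1 * g6 * g14⁻¹ * g5 = 1 ∧
    g1 * g2 * g8⁻¹ * g6 = 1 ∧
    g2 ^ 2 * g6⁻¹ * g11⁻¹ = 1 ∧
    g1 ^ 2 * g13⁻¹ * g2 = 1 ∧
    g1 * g17⁻¹ * g14 * g2⁻¹ = 1 :=
  ⟨r1, r2, r3, r4, r5, r6, r7, r8, r9, r10, r11, r12, r13, r14, r15, r16, r17, r18, r19, r20, r21, r22, r23, r24⟩
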